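/- Let n ≥ 5, set C₁ = 6n, and let η ∈ (0,1) and C_M > 0. Let t₀ < t₁ < ⋯ < t_N be real numbers, set I = [t₀, t_N] and I_j = [t_{j−1}, t_j], and let u : ℝ × ℝⁿ → ℂ be measurable. Assume: (i) for every 1 ≤ j ≤ N and every t ∈ I_j, ∫_{{x : ‖x‖ ≤ η^{−3C₁}(t_j − t_{j−1})^{1/2}}} |u(t,x)|² dx ≥ η^{C₁}·(t_j − t_{j−1}); and (ii) ∫_I ∫_{{x : ‖x‖ ≤ 2η^{−3C₁}(t_N − t₀)^{1/2}}} |u(t,x)|²/‖x‖³ dx dt ≤ C_M · η^{−3C₁} · (t_N − t₀)^{1/2}. Then Σ_{j=1}^N (t_j − t_{j−1})^{1/2} ≤ C_M · η^{−13C₁} · (t_N − t₀)^{1/2}. -/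

import Mathlib

open MeasureTheory Set
open scoped ENNReal NNReal

noncomputable section

abbrev En (n : ℕ) := EuclideanSpace ℝ (Fin n)

/-- Summing the local mass concentration bounds against the Morawetz bound:
if on each tile `I_j = [t_{j-1}, t_j]` the solution concentrates mass
`≥ η^{C₁}|I_j|` in the ball of radius `η^{-3C₁}|I_j|^{1/2}`, while the Morawetz
quantity over `I = [t₀, t_N]` is bounded by `C_M η^{-3C₁}|I|^{1/2}`, then
`∑_j |I_j|^{1/2} ≤ C_M η^{-13C₁} |I|^{1/2}`. Here `C₁ = 6n`. -/
theorem sum_sqrt_lengths_bound (n : ℕ) (hn : 5 ≤ n) (C₁ : ℕ) (hC₁ : C₁ = 6 * n)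
    (η : ℝ) (hη0 : 0 < η) (hη1 : η < 1) (CM : ℝ) (hCM : 0 < CM)
    (N : ℕ) (t : ℕ → ℝ) (hmono : ∀ i < N, t i < t (i + 1))
    (u : ℝ × En n → ℂ) (hu : Measurable u)
    (hconc : ∀ j < N, ∀ s ∈ Set.Icc (t j) (t (j + 1)),
      ENNReal.ofReal (η ^ C₁ * (t (j + 1) - t j))
        ≤ ∫⁻ x in {x : En n | ‖x‖ ≤ (η ^ (3 * C₁))⁻¹ * Real.sqrt (t (j + 1) - t j)},
            (‖u (s, x)‖₊ : ℝ≥0∞) ^ 2)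
    (hmorawetz :
      (∫⁻ s in Set.Icc (t 0) (t N),
        ∫⁻ x in {x : En n | ‖x‖ ≤ 2 * (η ^ (3 * C₁))⁻¹ * Real.sqrt (t N - t 0)},
          (‖u (s, x)‖₊ : ℝ≥0∞) ^ 2 / (‖x‖₊ : ℝ≥0∞) ^ 3)
        ≤ ENNReal.ofReal (CM * (η ^ (3 * C₁))⁻¹ * Real.sqrt (t N - t 0))) :
    (∑ j ∈ Finset.range N, Real.sqrt (t (j + 1) - t j))
      ≤ CM * (η ^ (13 * C₁))⁻¹ * Real.sqrt (t N - t 0) := by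
  have hηpow : ∀ k : ℕ, (0:ℝ) < η ^ k := fun k => pow_pos hη0 k
  -- monotonicity of t up to N
  have ht : ∀ ⦃i j : ℕ⦄, i ≤ j → j ≤ N → t i ≤ t j := by
    intro i j hij
    induction hij with
    | refl => intro _; exact le_refl _
    | @step m h ih =>
        intro hj
        exact (ih (Nat.le_of_succ_le hj)).trans (hmono m (by omega)).le
  set R := 2 * (η ^ (3 * C₁))⁻¹ * Real.sqrt (t N - t 0) with hRdef
  set F : ℝ → ℝ≥0∞ := fun s =>
    ∫⁻ x in {x : En n | ‖x‖ ≤ R}, (‖u (s, x)‖₊ : ℝ≥0∞) ^ 2 / (‖x‖₊ : ℝ≥0∞) ^ 3 with hFdef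
  -- per-tile lower bound
  have key : ∀ j < N, ENNReal.ofReal (η ^ (10*C₁) * Real.sqrt (t (j+1) - t j))
      ≤ ∫⁻ s in Set.Ico (t j) (t (j+1)), F s := by
    intro j hj
    have hd : 0 < t (j+1) - t j := sub_pos.2 (hmono j hj)
    set r : ℝ := (η ^ (3 * C₁))⁻¹ * Real.sqrt (t (j+1) - t j) with hrdef
    have hr : 0 < r := by
      apply mul_pos (inv_pos.2 (hηpow _)) (Real.sqrt_pos.2 hd)
    have hrR : r ≤ R := by
      have h1 : Real.sqrt (t (j+1) - t j) ≤ Real.sqrt (t N - t 0) := by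
        apply Real.sqrt_le_sqrt
        have : t 0 ≤ t j := ht (Nat.zero_le j) (by omega)
        have : t (j+1) ≤ t N := ht (by omega) (le_refl N)
        linarith [ht (Nat.zero_le j) (le_of_lt hj)]
      have h2 : (0:ℝ) ≤ (η ^ (3 * C₁))⁻¹ := le_of_lt (inv_pos.2 (hηpow _))
      calc r = (η ^ (3 * C₁))⁻¹ * Real.sqrt (t (j+1) - t j) := hrdef
        _ ≤ (η ^ (3 * C₁))⁻¹ * Real.sqrt (t N - t 0) := by
            exact mul_le_mul_of_nonneg_left h1 h2
        _ ≤ R := by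
            rw [hRdef]
            nlinarith [Real.sqrt_nonneg (t N - t 0)]
    have hpt : ∀ s ∈ Set.Ico (t j) (t (j+1)),
        ENNReal.ofReal (η ^ C₁ * (t (j+1) - t j)) / ENNReal.ofReal (r ^ 3) ≤ F s := by
      intro s hs
      have h1 := hconc j hj s (Set.Ico_subset_Icc_self hs)
      calc ENNReal.ofReal (η ^ C₁ * (t (j+1) - t j)) / ENNReal.ofReal (r ^ 3)
          ≤ (∫⁻ x in {x : En n | ‖x‖ ≤ r}, (‖u (s, x)‖₊ : ℝ≥0∞) ^ 2) / ENNReal.ofReal (r ^ 3) :=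
            ENNReal.div_le_div_right h1 _
        _ = ∫⁻ x in {x : En n | ‖x‖ ≤ r},
              (‖u (s, x)‖₊ : ℝ≥0∞) ^ 2 / ENNReal.ofReal (r ^ 3) := by
            have hne : (ENNReal.ofReal (r ^ 3))⁻¹ ≠ ⊤ :=
              ENNReal.inv_ne_top.2 (by
                simp only [ne_eq, ENNReal.ofReal_eq_zero, not_le]
                exact pow_pos hr 3)
            simp only [ENNReal.div_eq_inv_mul]
            exact (lintegral_const_mul' _ _ hne).symm
        _ ≤ ∫⁻ x in {x : En n | ‖x‖ ≤ r},
              (‖u (s, x)‖₊ : ℝ≥0∞) ^ 2 / (‖x‖₊ : ℝ≥0∞) ^ 3 := by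
            apply setLIntegral_mono' (by
              exact measurableSet_le (by fun_prop) measurable_const)
            intro x hx
            apply ENNReal.div_le_div_left
            have hxr : (‖x‖₊ : ℝ≥0∞) ≤ ENNReal.ofReal r := by
              rw [show (‖x‖₊ : ℝ≥0∞) = ENNReal.ofReal ‖x‖ from (ofReal_norm x).symm]
              exact ENNReal.ofReal_le_ofReal hx
            calc (‖x‖₊ : ℝ≥0∞) ^ 3 ≤ (ENNReal.ofReal r) ^ 3 := pow_le_pow_left₀ zero_le hxr _
              _ = ENNReal.ofReal (r ^ 3) := (ENNReal.ofReal_pow hr.le 3).symm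
        _ ≤ F s := by
            apply lintegral_mono_set
            intro x hx
            exact le_trans hx hrR
    calc ENNReal.ofReal (η ^ (10*C₁) * Real.sqrt (t (j+1) - t j))
        = ENNReal.ofReal (η ^ C₁ * (t (j+1) - t j)) / ENNReal.ofReal (r ^ 3)
            * ENNReal.ofReal (t (j+1) - t j) := by
          have hnum : (0:ℝ) ≤ η ^ C₁ * (t (j+1) - t j) / r ^ 3 :=
            div_nonneg (mul_nonneg (hηpow C₁).le hd.le) (pow_pos hr 3).le
          rw [← ENNReal.ofReal_div_of_pos (pow_pos hr 3), ← ENNReal.ofReal_mul hnum]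
          congr 1
          have hsq : Real.sqrt (t (j+1) - t j) ^ 2 = t (j+1) - t j :=
            Real.sq_sqrt hd.le
          have hsqpos : 0 < Real.sqrt (t (j+1) - t j) := Real.sqrt_pos.2 hd
          have he3 : (η ^ (3*C₁)) ^ 3 = η ^ (9*C₁) := by
            rw [← pow_mul]; ring_nf
          have h10 : η ^ (10*C₁) = η ^ C₁ * η ^ (9*C₁) := by
            rw [← pow_add]; ring_nf
          have hη := hη0.ne'
          have hd' := hd.ne'
          have hs' := hsqpos.ne'
          rw [hrdef, mul_pow, inv_pow, pow_succ (Real.sqrt _) 2, hsq, h10, ← he3]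
          field_simp
          ring_nf
          ring_nf at hsq
          rw [hsq]
      _ = ∫⁻ _ in Set.Ico (t j) (t (j+1)),
            (ENNReal.ofReal (η ^ C₁ * (t (j+1) - t j)) / ENNReal.ofReal (r ^ 3)) := by
          rw [setLIntegral_const, Real.volume_Ico]
      _ ≤ ∫⁻ s in Set.Ico (t j) (t (j+1)), F s :=
          setLIntegral_mono' measurableSet_Ico hpt
  -- sum over tiles
  have hdisj : Set.Pairwise ↑(Finset.range N)
      (Function.onFun Disjoint fun j => Set.Ico (t j) (t (j+1))) := by
    intro i hi j hj hij
    simp only [Finset.coe_range, Set.mem_Iio] at hi hj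
    rcases hij.lt_or_gt with h | h
    · refine Set.Ico_disjoint_Ico.2 ?_
      have : t (i+1) ≤ t j := ht (by omega) (le_of_lt hj)
      exact le_trans (min_le_left _ _) (le_trans this (le_max_right _ _))
    · refine Set.Ico_disjoint_Ico.2 ?_
      have : t (j+1) ≤ t i := ht (by omega) (le_of_lt hi)
      exact le_trans (min_le_right _ _) (le_trans this (le_max_left _ _))
  have hsub : (⋃ j ∈ Finset.range N, Set.Ico (t j) (t (j+1))) ⊆ Set.Icc (t 0) (t N) := by
    intro s hs
    simp only [Set.mem_iUnion, Finset.mem_range] at hs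
    obtain ⟨j, hj, hs1, hs2⟩ := hs
    exact ⟨le_trans (ht (Nat.zero_le j) (le_of_lt hj)) hs1,
      le_trans hs2.le (ht (by omega) (le_refl N))⟩
  have hsum : ENNReal.ofReal (η ^ (10*C₁) * ∑ j ∈ Finset.range N, Real.sqrt (t (j+1) - t j))
      ≤ ENNReal.ofReal (CM * (η ^ (3 * C₁))⁻¹ * Real.sqrt (t N - t 0)) := by
    calc ENNReal.ofReal (η ^ (10*C₁) * ∑ j ∈ Finset.range N, Real.sqrt (t (j+1) - t j))
        = ∑ j ∈ Finset.range N, ENNReal.ofReal (η ^ (10*C₁) * Real.sqrt (t (j+1) - t j)) := by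
          rw [Finset.mul_sum, ENNReal.ofReal_sum_of_nonneg]
          intro j hj
          positivity
      _ ≤ ∑ j ∈ Finset.range N, ∫⁻ s in Set.Ico (t j) (t (j+1)), F s :=
          Finset.sum_le_sum fun j hj => key j (Finset.mem_range.mp hj)
      _ = ∫⁻ s in ⋃ j ∈ Finset.range N, Set.Ico (t j) (t (j+1)), F s :=
          (lintegral_biUnion_finset hdisj (fun j _ => measurableSet_Ico) F).symm
      _ ≤ ∫⁻ s in Set.Icc (t 0) (t N), F s := lintegral_mono_set hsub
      _ ≤ ENNReal.ofReal (CM * (η ^ (3 * C₁))⁻¹ * Real.sqrt (t N - t 0)) := hmorawetz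
  have h0 : 0 ≤ CM * (η ^ (3 * C₁))⁻¹ * Real.sqrt (t N - t 0) := by positivity
  have hreal := (ENNReal.ofReal_le_ofReal_iff h0).mp hsum
  have h13 : (13 : ℕ) * C₁ = 10 * C₁ + 3 * C₁ := by ring
  rw [h13, pow_add]
  rw [← sub_nonneg]
  have hexp : CM * (η ^ (10*C₁) * η ^ (3 * C₁))⁻¹ * Real.sqrt (t N - t 0)
      - ∑ j ∈ Finset.range N, Real.sqrt (t (j+1) - t j)
      = (CM * (η ^ (3 * C₁))⁻¹ * Real.sqrt (t N - t 0)
          - η ^ (10*C₁) * ∑ j ∈ Finset.range N, Real.sqrt (t (j+1) - t j)) / η ^ (10*C₁) := by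
    field_simp
  rw [hexp]
  exact div_nonneg (by linarith) (hηpow _).le

end
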